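/- For k = 2, p = 1, f_1 < f_2 and L_1 > L_2 > 0, set λ_T = 1/L_2. Then the minimizers of G(v_1,v_2) = |v_2 - v_1| + λ(L_1|v_1 - f_1| + L_2|v_2 - f_2|) are: for λ < λ_T the unique minimizer is v_1 = v_2 = f_1; for λ > λ_T the unique minimizer is v_1 = f_1, v_2 = f_2; and for λ = λ_T the set of minimizers is exactly {(f_1, t) : t ∈ [f_1, f_2]}. -/
import Mathlib


/-- The two-interval discrete energy with `L^1` fidelity (`p = 1`). -/
noncomputable def G2 (lam L1 L2 f1 f2 : ℝ) (v : ℝ × ℝ) : ℝ :=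
  |v.2 - v.1| + lam * (L1 * |v.1 - f1| + L2 * |v.2 - f2|)

private lemma tri19 (v1 v2 f1 f2 : ℝ) :
    f2 - f1 ≤ |v2 - v1| + |v1 - f1| + |v2 - f2| := by
  have h1 := le_abs_self (v2 - v1)
  have h2 := le_abs_self (v1 - f1)
  have h3 := neg_abs_le (v2 - f2)
  linarith

private lemma Gge1 (a b v1 v2 f1 f2 : ℝ) (hb : 0 ≤ b) (hb1 : b ≤ 1) (hab : b ≤ a) :
    b * (f2 - f1) + (1 - b) * |v2 - v1| + (a - b) * |v1 - f1| ≤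
      |v2 - v1| + a * |v1 - f1| + b * |v2 - f2| := by
  have := mul_le_mul_of_nonneg_left (tri19 v1 v2 f1 f2) hb
  nlinarith [abs_nonneg (v2 - v1), abs_nonneg (v1 - f1), abs_nonneg (v2 - f2)]

private lemma Gge2 (a b v1 v2 f1 f2 : ℝ) (hb1 : 1 ≤ b) (hab : b ≤ a) :
    (f2 - f1) + (a - 1) * |v1 - f1| + (b - 1) * |v2 - f2| ≤
      |v2 - v1| + a * |v1 - f1| + b * |v2 - f2| := by
  have := tri19 v1 v2 f1 f2
  nlinarith [abs_nonneg (v2 - v1), abs_nonneg (v1 - f1), abs_nonneg (v2 - f2)]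

/-- for `k = 2`, `p = 1`, `f₁ < f₂` and `L₁ > L₂ > 0`, with
`λ_T = 1/L₂`: below `λ_T` the unique minimizer is `(f₁,f₁)`, above it `(f₁,f₂)`,
and at `λ_T` the minimizers are exactly `{(f₁,t) : t ∈ [f₁,f₂]}`. -/
theorem stmt19 (lam L1 L2 f1 f2 : ℝ) (hlam : 0 < lam)
    (hL2 : 0 < L2) (hL12 : L2 < L1) (hf : f1 < f2) :
    (lam < 1 / L2 →
      {w : ℝ × ℝ | ∀ v : ℝ × ℝ, G2 lam L1 L2 f1 f2 w ≤ G2 lam L1 L2 f1 f2 v} =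
        {(f1, f1)}) ∧
    (lam = 1 / L2 →
      {w : ℝ × ℝ | ∀ v : ℝ × ℝ, G2 lam L1 L2 f1 f2 w ≤ G2 lam L1 L2 f1 f2 v} =
        {w : ℝ × ℝ | w.1 = f1 ∧ w.2 ∈ Set.Icc f1 f2}) ∧
    (1 / L2 < lam →
      {w : ℝ × ℝ | ∀ v : ℝ × ℝ, G2 lam L1 L2 f1 f2 w ≤ G2 lam L1 L2 f1 f2 v} =
        {(f1, f2)}) := by
  set a := lam * L1 with ha
  set b := lam * L2 with hb
  have hb0 : 0 < b := mul_pos hlam hL2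
  have hba : b < a := by
    apply mul_lt_mul_of_pos_left hL12 hlam
  have hG : ∀ v : ℝ × ℝ, G2 lam L1 L2 f1 f2 v =
      |v.2 - v.1| + a * |v.1 - f1| + b * |v.2 - f2| := by
    intro v; simp only [G2, ha, hb]; ring
  have e12 : |f1 - f2| = f2 - f1 := by rw [abs_of_neg (by linarith)]; ring
  have e21 : |f2 - f1| = f2 - f1 := abs_of_pos (by linarith)
  refine ⟨?_, ?_, ?_⟩
  · -- lam < 1/L2
    intro h
    have hb1 : b < 1 := by rw [lt_div_iff₀ hL2] at h; exact h
    ext w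
    simp only [Set.mem_setOf_eq, Set.mem_singleton_iff]
    constructor
    · intro hw
      have h0 := hw (f1, f1)
      rw [hG, hG] at h0
      simp only [sub_self, abs_zero, mul_zero, add_zero, zero_add, e12] at h0
      have key := Gge1 a b w.1 w.2 f1 f2 hb0.le hb1.le hba.le
      have hX := abs_nonneg (w.2 - w.1)
      have hY := abs_nonneg (w.1 - f1)
      have hY0 : |w.1 - f1| = 0 := by nlinarith
      have hX0 : |w.2 - w.1| = 0 := by nlinarith
      have h1 : w.1 = f1 := by have := abs_eq_zero.mp hY0; linarith
      have h2 : w.2 = w.1 := by have := abs_eq_zero.mp hX0; linarith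
      exact Prod.ext h1 (by rw [h2, h1])
    · rintro rfl
      intro v
      rw [hG, hG]
      simp only [sub_self, abs_zero, mul_zero, add_zero, zero_add, e12]
      have key := Gge1 a b v.1 v.2 f1 f2 hb0.le hb1.le hba.le
      nlinarith [abs_nonneg (v.2 - v.1), abs_nonneg (v.1 - f1)]
  · -- lam = 1/L2
    intro h
    have hb1 : b = 1 := by rw [hb, h]; field_simp
    ext w
    simp only [Set.mem_setOf_eq, Set.mem_Icc]
    constructor
    · intro hw
      have h0 := hw (f1, f2)
      rw [hG, hG] at h0
      simp only [sub_self, abs_zero, mul_zero, add_zero, e21] at h0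
      have key := Gge2 a b w.1 w.2 f1 f2 hb1.ge hba.le
      rw [hb1] at key h0
      have haz : 1 < a := hb1 ▸ hba
      have hY := abs_nonneg (w.1 - f1)
      have hY0 : |w.1 - f1| = 0 := by nlinarith
      have h1 : w.1 = f1 := by have := abs_eq_zero.mp hY0; linarith
      have e4 : |w.2 - w.1| = |w.2 - f1| := by rw [h1]
      have hGw : |w.2 - f1| + |w.2 - f2| ≤ f2 - f1 := by
        rw [e4, hY0] at h0; linarith
      have b1 := le_abs_self (w.2 - f1)
      have b2 := le_abs_self (w.2 - f2)
      have b3 := neg_abs_le (w.2 - f1)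
      have b4 := neg_abs_le (w.2 - f2)
      exact ⟨h1, by linarith, by linarith⟩
    · rintro ⟨h1, h2, h3⟩
      intro v
      rw [hG, hG]
      have e1 : |w.2 - w.1| = w.2 - f1 := by rw [h1]; exact abs_of_nonneg (by linarith)
      have e2 : |w.1 - f1| = 0 := by rw [h1]; simp
      have e3 : |w.2 - f2| = f2 - w.2 := by rw [abs_sub_comm]; exact abs_of_nonneg (by linarith)
      rw [e1, e2, e3, hb1]
      have key := Gge2 a b v.1 v.2 f1 f2 hb1.ge hba.le
      rw [hb1] at key
      nlinarith [abs_nonneg (v.1 - f1)]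
  · -- lam > 1/L2
    intro h
    have hb1 : 1 < b := by rw [div_lt_iff₀ hL2] at h; linarith [h]
    ext w
    simp only [Set.mem_setOf_eq, Set.mem_singleton_iff]
    constructor
    · intro hw
      have h0 := hw (f1, f2)
      rw [hG, hG] at h0
      simp only [sub_self, abs_zero, mul_zero, add_zero, e21] at h0
      have key := Gge2 a b w.1 w.2 f1 f2 hb1.le hba.le
      have hY := abs_nonneg (w.1 - f1)
      have hZ := abs_nonneg (w.2 - f2)
      have hY0 : |w.1 - f1| = 0 := by nlinarith
      have hZ0 : |w.2 - f2| = 0 := by nlinarith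
      have h1 : w.1 = f1 := by have := abs_eq_zero.mp hY0; linarith
      have h2 : w.2 = f2 := by have := abs_eq_zero.mp hZ0; linarith
      exact Prod.ext h1 h2
    · rintro rfl
      intro v
      rw [hG, hG]
      simp only [sub_self, abs_zero, mul_zero, add_zero, e21]
      have key := Gge2 a b v.1 v.2 f1 f2 hb1.le hba.le
      nlinarith [abs_nonneg (v.1 - f1), abs_nonneg (v.2 - f2)]
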